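/- Let y1 < y2 < x1 < x2 be real numbers and define A₀(x) := −(2/(x2−x1))(x−x1)(x−x2) and B₀(y) := −(2/(y2−y1))(y−y1)(y−y2). Then there exist real numbers t > 0 and λ > 0 such that E(t·A₀, B₀, λ)(x,y) = 0 for all real x, y. Moreover, there are exactly two positive real numbers t for which E(t·A₀, B₀, 0) vanishes identically. -/

import Mathlib

/-- The orthotoric expression `E(A,B,λ)(x,y)` associated to profile functions
`A, B : ℝ → ℝ` and a real parameter `λ`:  it equals `(x-y)⁴` times the operator `𝒮`
of the Bismut-Ricci-flat equation evaluated on the orthotoric Kähler ansatz. -/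
noncomputable def orthoE (A B : ℝ → ℝ) (lam : ℝ) (x y : ℝ) : ℝ :=
  ((x - y) ^ 2 / 2) *
      (deriv (fun t => A t * deriv^[3] A t) x + deriv (fun t => B t * deriv^[3] B t) y +
        deriv^[2] A x * deriv^[2] B y) -
    (x - y) *
      (A x * deriv^[3] A x - B y * deriv^[3] B y + deriv A x * deriv^[2] B y -
        deriv B y * deriv^[2] A x) +
    (A x + B y) * (deriv^[2] A x + deriv^[2] B y) -
    (1 / 2) * (deriv A x + deriv B y) ^ 2 - 2 * lam ^ 2



lemma deriv_quad (a p q : ℝ) :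
    deriv (fun x : ℝ => a * x ^ 2 + p * x + q) = fun x => 2 * a * x + p := by
  funext x
  have h1 : HasDerivAt (fun x : ℝ => x ^ 2) (2 * x) x := by simpa using hasDerivAt_pow 2 x
  have h2 : HasDerivAt (fun x : ℝ => a * x ^ 2 + p * x + q) (a * (2 * x) + p * 1) x := by
    have := (h1.const_mul a).add (((hasDerivAt_id x).const_mul p).add_const q)
    exact this.congr_of_eventuallyEq (Filter.Eventually.of_forall fun t => by simp [id]; ring)
  have := h2.deriv
  rw [this]; ring

lemma deriv_lin (a p : ℝ) :
    deriv (fun x : ℝ => 2 * a * x + p) = fun _ => 2 * a := by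
  funext x
  have h2 : HasDerivAt (fun x : ℝ => 2 * a * x + p) (2 * a * 1) x := by
    exact ((hasDerivAt_id x).const_mul (2 * a)).add_const p
  have := h2.deriv
  rw [this]; ring

lemma quad2 (a p q : ℝ) :
    deriv^[2] (fun x : ℝ => a * x ^ 2 + p * x + q) = fun _ => 2 * a := by
  show deriv (deriv _) = _
  rw [deriv_quad, deriv_lin]

lemma quad3 (a p q : ℝ) :
    deriv^[3] (fun x : ℝ => a * x ^ 2 + p * x + q) = fun _ => (0:ℝ) := by
  show deriv (deriv (deriv _)) = _
  rw [deriv_quad, deriv_lin]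
  funext x; simp

lemma orthoE_quad (a p q b r s lam x y : ℝ) :
    orthoE (fun x => a * x ^ 2 + p * x + q) (fun y => b * y ^ 2 + r * y + s) lam x y
      = 2 * (a + b) * (q + s) - (p + r) ^ 2 / 2 - 2 * lam ^ 2 := by
  have hA3 := quad3 a p q
  have hB3 := quad3 b r s
  simp only [orthoE, hA3, hB3, quad2, deriv_quad, mul_zero, deriv_const', sub_zero]
  ring


theorem stmt_6 (x1 x2 y1 y2 : ℝ) (h1 : y1 < y2) (h2 : y2 < x1) (h3 : x1 < x2)
    (A0 B0 : ℝ → ℝ)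
    (hA0 : ∀ x, A0 x = -(2 / (x2 - x1)) * ((x - x1) * (x - x2)))
    (hB0 : ∀ y, B0 y = -(2 / (y2 - y1)) * ((y - y1) * (y - y2))) :
    -- there is a scaling `t > 0` and a parameter `λ > 0` with `E(t·A₀, B₀, λ) ≡ 0` ...
    (∃ t lam : ℝ, 0 < t ∧ 0 < lam ∧
        ∀ x y : ℝ, orthoE (fun x => t * A0 x) B0 lam x y = 0) ∧
    -- ... and exactly two positive scalings `t` with `E(t·A₀, B₀, 0) ≡ 0`.
    (∃ t1 t2 : ℝ, 0 < t1 ∧ 0 < t2 ∧ t1 ≠ t2 ∧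
        ∀ t : ℝ, 0 < t →
          ((∀ x y : ℝ, orthoE (fun x => t * A0 x) B0 0 x y = 0) ↔ t = t1 ∨ t = t2)) := by
  have hc : (0:ℝ) < x2 - x1 := by linarith
  have hd : (0:ℝ) < y2 - y1 := by linarith
  have hc' : x2 - x1 ≠ 0 := ne_of_gt hc
  have hd' : y2 - y1 ≠ 0 := ne_of_gt hd
  set N : ℝ := 2 * ((x1 - y1) * (x2 - y2) + (x1 - y2) * (x2 - y1)) / ((x2 - x1) * (y2 - y1))
    with hN
  -- the key computation: orthoE is the constant -2*(t^2 - N*t + 1 + lam^2)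
  have hval : ∀ t lam x y : ℝ,
      orthoE (fun x => t * A0 x) B0 lam x y = -2 * (t ^ 2 - N * t + 1 + lam ^ 2) := by
    intro t lam x y
    have hAfun : (fun x => t * A0 x)
        = fun x => (t * (-(2 / (x2 - x1)))) * x ^ 2 + (t * (2 * (x1 + x2) / (x2 - x1))) * x
            + (t * (-(2 * (x1 * x2) / (x2 - x1)))) := by
      funext u; rw [hA0]; field_simp; ring
    have hBfun : B0
        = fun y => (-(2 / (y2 - y1))) * y ^ 2 + (2 * (y1 + y2) / (y2 - y1)) * y
            + (-(2 * (y1 * y2) / (y2 - y1))) := by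
      funext u; rw [hB0]; field_simp; ring
    rw [hAfun, hBfun, orthoE_quad, hN]
    field_simp
    ring
  have hN2 : 2 < N := by
    have hsub : N - 2 = 4 * ((x1 - y2) * (x2 - y1)) / ((x2 - x1) * (y2 - y1)) := by
      rw [hN]; field_simp; ring
    have hpos : 0 < 4 * ((x1 - y2) * (x2 - y1)) / ((x2 - x1) * (y2 - y1)) := by
      apply div_pos (by nlinarith) (mul_pos hc hd)
    linarith
  clear_value N
  clear hN
  constructor
  · -- first part
    have hgt : 0 < N ^ 2 / 4 - 1 := by nlinarith
    refine ⟨N / 2, Real.sqrt (N ^ 2 / 4 - 1), by linarith, Real.sqrt_pos.2 hgt, ?_⟩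
    intro x y
    rw [hval, Real.sq_sqrt hgt.le]
    ring
  · -- second part
    have hge : (0:ℝ) ≤ N ^ 2 - 4 := by nlinarith
    set s : ℝ := Real.sqrt (N ^ 2 - 4) with hsdef
    have hs2 : s ^ 2 = N ^ 2 - 4 := Real.sq_sqrt hge
    have hspos : 0 < s := Real.sqrt_pos.2 (by nlinarith)
    have hsN : s < N := by nlinarith [hs2, hspos]
    refine ⟨(N - s) / 2, (N + s) / 2, by linarith, by linarith, by intro h; linarith, ?_⟩
    intro t _
    constructor
    · intro h
      have h0 := h 0 0
      rw [hval] at h0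
      have heq : t ^ 2 - N * t + 1 = 0 := by nlinarith [h0]
      have hfac : (t - (N - s) / 2) * (t - (N + s) / 2) = 0 := by
        linear_combination heq + (-1/4 : ℝ) * hs2
      rcases mul_eq_zero.1 hfac with h' | h'
      · exact Or.inl (by linarith)
      · exact Or.inr (by linarith)
    · intro h x y
      rw [hval]
      rcases h with h | h <;> rw [h] <;> linear_combination (-1/2 : ℝ) * hs2
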